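/- Let H₁, H₂ be finite-dimensional complex Hilbert spaces, ρ a density operator on H₁ ⊗ H₂, and POVMs Mₙ^{(sₙ)} on Hₙ with finite outcome sets Λₙ for sₙ ∈ {1,…,Sₙ}, n ∈ {1,2}. Then the quantum correlation scenario with distributions P_{(s₁,s₂)}(λ₁,λ₂) = tr[ρ (M₁^{(s₁)}(λ₁) ⊗ M₂^{(s₂)}(λ₂))] admits a deterministic LqHV model: there exist a finite set Ω, a function ν : Ω → ℝ with ∑ν = 1, and functions f_{n,sₙ} : Ω → Λₙ with P_{(s₁,s₂)}(λ₁,λ₂) = ν({ω : f_{1,s₁}(ω) = λ₁ and f_{2,s₂}(ω) = λ₂}) for all settings and outcomes. -/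

import Mathlib

open Matrix Kronecker ComplexOrder

set_option linter.unusedSectionVars false
set_option maxHeartbeats 1000000

section Helpers
open Finset

section helpers
variable {S : ℕ} {Λ : Type} [Fintype Λ] [DecidableEq Λ]

lemma sum_pi_prod (F : Fin S → Λ → ℝ) :
    ∑ g : Fin S → Λ, ∏ s, F s (g s) = ∏ s, ∑ x, F s x :=
  (Fintype.prod_sum F).symm

/-- Unfiltered weighted sum. -/
lemma sum_pi_weight (F : Fin S → Λ → ℝ) (hF : ∀ s, ∑ x, F s x = 1)
    (s : Fin S) (φ : Λ → ℝ) :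
    ∑ g : Fin S → Λ, φ (g s) * ∏ s' ∈ univ.erase s, F s' (g s') = ∑ x, φ x := by
  have key : ∀ g : Fin S → Λ, φ (g s) * ∏ s' ∈ univ.erase s, F s' (g s')
      = ∏ s', (if s' = s then φ (g s') else F s' (g s')) := by
    intro g
    rw [← Finset.mul_prod_erase univ _ (Finset.mem_univ s)]
    simp only [if_pos rfl]
    congr 1
    exact Finset.prod_congr rfl fun s' hs' => by
      rw [if_neg (Finset.mem_erase.mp hs').1]
  simp only [key]
  rw [sum_pi_prod (fun s' x => if s' = s then φ x else F s' x)]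
  rw [← Finset.mul_prod_erase univ _ (Finset.mem_univ s)]
  simp only [if_pos rfl]
  rw [Finset.prod_congr rfl (fun s' hs' => by
    simp only [if_neg (Finset.mem_erase.mp hs').1]; exact hF s'), Finset.prod_const_one,
    mul_one]
  simp

/-- Filtered weighted sum. -/
lemma sum_pi_filter_weight (F : Fin S → Λ → ℝ) (hF : ∀ s, ∑ x, F s x = 1)
    (s₀ : Fin S) (a : Λ) (s : Fin S) (φ : Λ → ℝ) :
    ∑ g ∈ univ.filter (fun g : Fin S → Λ => g s₀ = a),
        φ (g s) * ∏ s' ∈ univ.erase s, F s' (g s')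
    = if s = s₀ then φ a else (∑ x, φ x) * F s₀ a := by
  classical
  set H : Fin S → Λ → ℝ := fun s' x =>
    (if s' = s then φ x else F s' x) * (if s' = s₀ then (if x = a then 1 else 0) else 1) with hH
  have key : ∀ g : Fin S → Λ,
      (if g s₀ = a then φ (g s) * ∏ s' ∈ univ.erase s, F s' (g s') else 0)
        = ∏ s', H s' (g s') := by
    intro g
    rw [hH]
    simp only
    rw [Finset.prod_mul_distrib]
    have h2 : (∏ s', (if s' = s₀ then (if g s' = a then (1:ℝ) else 0) else 1))
        = if g s₀ = a then 1 else 0 := by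
      rw [Finset.prod_ite_eq' univ s₀ (fun s' => if g s' = a then (1:ℝ) else 0)]
      simp
    have h1 : (∏ s', (if s' = s then φ (g s') else F s' (g s')))
        = φ (g s) * ∏ s' ∈ univ.erase s, F s' (g s') := by
      rw [← Finset.mul_prod_erase univ _ (Finset.mem_univ s)]
      simp only [if_pos rfl]
      congr 1
      exact Finset.prod_congr rfl fun s' hs' => by rw [if_neg (Finset.mem_erase.mp hs').1]
    rw [h1, h2]
    by_cases h : g s₀ = a <;> simp [h]
  rw [Finset.sum_filter]
  simp only [key]
  rw [sum_pi_prod H]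
  have hsum : ∀ s', ∑ x, H s' x
      = if s' = s then (if s' = s₀ then φ a else ∑ x, φ x)
        else (if s' = s₀ then F s₀ a else 1) := by
    intro s'
    by_cases h1 : s' = s <;> by_cases h2 : s' = s₀ <;>
      simp only [hH, h1, h2, if_pos, if_neg, if_true, if_false, mul_one] <;>
      first
        | (subst h2; simp [mul_ite, mul_one, mul_zero])
        | simp [h1, h2, mul_ite, mul_one, mul_zero, hF]
  simp only [hsum]
  by_cases hss : s = s₀
  · subst hss
    rw [← Finset.mul_prod_erase univ _ (Finset.mem_univ s)]
    rw [if_pos rfl, if_pos rfl, if_pos rfl]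
    rw [Finset.prod_eq_one (fun s' hs' => by
      simp [(Finset.mem_erase.mp hs').1]), mul_one]
  · rw [if_neg hss]
    rw [← Finset.mul_prod_erase univ _ (Finset.mem_univ s)]
    rw [if_pos rfl, if_neg hss]
    have hs₀ : s₀ ∈ univ.erase s := Finset.mem_erase.mpr ⟨fun h => hss h.symm, Finset.mem_univ _⟩
    rw [← Finset.mul_prod_erase _ _ hs₀]
    rw [if_neg (fun h : s₀ = s => hss h.symm), if_pos rfl]
    rw [Finset.prod_eq_one (fun s' hs' => by
      have h2 := (Finset.mem_erase.mp hs').1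
      have h1 := (Finset.mem_erase.mp (Finset.mem_erase.mp hs').2).1
      simp [h1, h2]), mul_one]

/-- Filtered product sum. -/
lemma sum_pi_filter_prod (F : Fin S → Λ → ℝ) (hF : ∀ s, ∑ x, F s x = 1)
    (s₀ : Fin S) (a : Λ) :
    ∑ g ∈ univ.filter (fun g : Fin S → Λ => g s₀ = a), ∏ s, F s (g s) = F s₀ a := by
  have : ∀ g : Fin S → Λ, ∏ s, F s (g s)
      = F s₀ (g s₀) * ∏ s' ∈ univ.erase s₀, F s' (g s') :=
    fun g => (Finset.mul_prod_erase univ _ (Finset.mem_univ s₀)).symm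
  have h2 := sum_pi_filter_weight F hF s₀ a s₀ (F s₀)
  rw [if_pos rfl] at h2
  rw [← h2]
  refine Finset.sum_congr rfl fun g hg => ?_
  rw [this g, (Finset.mem_filter.mp hg).2]

end helpers


lemma sum_comm4 {α β γ δ : Type*} (A : Finset α) (B : Finset β) (C : Finset γ) (D : Finset δ)
    (f : α → β → γ → δ → ℝ) :
    ∑ x ∈ A, ∑ y ∈ B, ∑ z ∈ C, ∑ w ∈ D, f x y z w
      = ∑ z ∈ C, ∑ w ∈ D, ∑ x ∈ A, ∑ y ∈ B, f x y z w := by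
  trans ∑ x ∈ A, ∑ z ∈ C, ∑ y ∈ B, ∑ w ∈ D, f x y z w
  · exact Finset.sum_congr rfl fun x _ => Finset.sum_comm
  trans ∑ z ∈ C, ∑ x ∈ A, ∑ y ∈ B, ∑ w ∈ D, f x y z w
  · exact Finset.sum_comm
  refine Finset.sum_congr rfl fun z _ => ?_
  trans ∑ x ∈ A, ∑ w ∈ D, ∑ y ∈ B, f x y z w
  · exact Finset.sum_congr rfl fun x _ => Finset.sum_comm
  exact Finset.sum_comm

lemma lqhv_core {Λ₁ Λ₂ : Type} [Fintype Λ₁] [DecidableEq Λ₁] [Fintype Λ₂] [DecidableEq Λ₂]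
    {S₁ S₂ : ℕ} (P : Fin S₁ → Fin S₂ → Λ₁ → Λ₂ → ℝ)
    (μ₁ : Fin S₁ → Λ₁ → ℝ) (μ₂ : Fin S₂ → Λ₂ → ℝ)
    (h1 : ∀ s t a, ∑ b, P s t a b = μ₁ s a)
    (h2 : ∀ s t b, ∑ a, P s t a b = μ₂ t b)
    (h3 : ∀ s, ∑ a, μ₁ s a = 1) (h4 : ∀ t, ∑ b, μ₂ t b = 1) :
    ∃ ν : (Fin S₁ → Λ₁) × (Fin S₂ → Λ₂) → ℝ,
      (∑ ω, ν ω) = 1 ∧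
      ∀ s₀ t₀ a b,
        ∑ ω ∈ univ.filter
            (fun ω : (Fin S₁ → Λ₁) × (Fin S₂ → Λ₂) => ω.1 s₀ = a ∧ ω.2 t₀ = b),
          ν ω = P s₀ t₀ a b := by
  classical
  set ν : (Fin S₁ → Λ₁) × (Fin S₂ → Λ₂) → ℝ := fun ω =>
    (∏ s, μ₁ s (ω.1 s)) * (∏ t, μ₂ t (ω.2 t))
      + ∑ s, ∑ t, (P s t (ω.1 s) (ω.2 t) - μ₁ s (ω.1 s) * μ₂ t (ω.2 t))
          * ((∏ s' ∈ univ.erase s, μ₁ s' (ω.1 s'))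
              * (∏ t' ∈ univ.erase t, μ₂ t' (ω.2 t'))) with hν
  have hP1 : ∀ s t, ∑ a', ∑ b', P s t a' b' = 1 := by
    intro s t
    rw [Finset.sum_congr rfl fun a' _ => h1 s t a', h3 s]
  have hδ₁ : ∀ a' : Λ₁, ∑ x, (if x = a' then (1:ℝ) else 0) = 1 := by
    intro a'; simp
  have hδ₂ : ∀ b' : Λ₂, ∑ x, (if x = b' then (1:ℝ) else 0) = 1 := by
    intro b'; simp
  have hPexp : ∀ s t (u : Λ₁) (v : Λ₂),
      P s t u v = ∑ a', ∑ b',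
        ((if u = a' then (1:ℝ) else 0) * (if v = b' then 1 else 0)) * P s t a' b' := by
    intro s t u v
    simp [ite_mul, mul_ite, Finset.sum_ite_eq]
  -- The generic double-sum evaluation, parametrized by the g-side and h-side sums.
  -- We'll compute the filtered marginal; the total mass is similar.
  refine ⟨ν, ?_, ?_⟩
  · -- total mass
    rw [Fintype.sum_prod_type]
    simp only [hν]
    rw [Finset.sum_congr rfl fun g _ => Finset.sum_add_distrib, Finset.sum_add_distrib]
    have T1 : ∑ g : Fin S₁ → Λ₁, ∑ h : Fin S₂ → Λ₂,
        (∏ s, μ₁ s (g s)) * (∏ t, μ₂ t (h t)) = 1 := by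
      rw [← Finset.sum_mul_sum, sum_pi_prod, sum_pi_prod]
      rw [Finset.prod_congr rfl fun s _ => h3 s, Finset.prod_congr rfl fun t _ => h4 t]
      simp
    have T2 : ∑ g : Fin S₁ → Λ₁, ∑ h : Fin S₂ → Λ₂,
        (∑ s, ∑ t, (P s t (g s) (h t) - μ₁ s (g s) * μ₂ t (h t))
          * ((∏ s' ∈ univ.erase s, μ₁ s' (g s'))
              * (∏ t' ∈ univ.erase t, μ₂ t' (h t')))) = 0 := by
      rw [sum_comm4]
      refine Finset.sum_eq_zero fun s _ => Finset.sum_eq_zero fun t _ => ?_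
      have split : ∀ (g : Fin S₁ → Λ₁) (h : Fin S₂ → Λ₂),
          (P s t (g s) (h t) - μ₁ s (g s) * μ₂ t (h t))
            * ((∏ s' ∈ univ.erase s, μ₁ s' (g s'))
                * (∏ t' ∈ univ.erase t, μ₂ t' (h t')))
          = (∑ a', ∑ b', P s t a' b' *
              (((if g s = a' then (1:ℝ) else 0) * ∏ s' ∈ univ.erase s, μ₁ s' (g s'))
                * ((if h t = b' then (1:ℝ) else 0) * ∏ t' ∈ univ.erase t, μ₂ t' (h t'))))
            - (μ₁ s (g s) * ∏ s' ∈ univ.erase s, μ₁ s' (g s'))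
                * (μ₂ t (h t) * ∏ t' ∈ univ.erase t, μ₂ t' (h t')) := by
        intro g h
        rw [sub_mul]
        congr 1
        · rw [hPexp s t (g s) (h t), Finset.sum_mul]
          refine Finset.sum_congr rfl fun a' _ => ?_
          rw [Finset.sum_mul]
          refine Finset.sum_congr rfl fun b' _ => ?_
          ring
        · ring
      simp only [split]
      rw [Finset.sum_congr rfl fun g _ => Finset.sum_sub_distrib _ _, Finset.sum_sub_distrib]
      have A2 : ∑ g : Fin S₁ → Λ₁, ∑ h : Fin S₂ → Λ₂,
          (μ₁ s (g s) * ∏ s' ∈ univ.erase s, μ₁ s' (g s'))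
            * (μ₂ t (h t) * ∏ t' ∈ univ.erase t, μ₂ t' (h t')) = 1 := by
        rw [← Finset.sum_mul_sum, sum_pi_weight μ₁ h3 s (μ₁ s),
          sum_pi_weight μ₂ h4 t (μ₂ t), h3 s, h4 t, mul_one]
      have A1 : ∑ g : Fin S₁ → Λ₁, ∑ h : Fin S₂ → Λ₂,
          (∑ a', ∑ b', P s t a' b' *
              (((if g s = a' then (1:ℝ) else 0) * ∏ s' ∈ univ.erase s, μ₁ s' (g s'))
                * ((if h t = b' then (1:ℝ) else 0) * ∏ t' ∈ univ.erase t, μ₂ t' (h t'))))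
          = 1 := by
        rw [sum_comm4]
        have : ∀ a' b', ∑ g : Fin S₁ → Λ₁, ∑ h : Fin S₂ → Λ₂,
            P s t a' b' *
              (((if g s = a' then (1:ℝ) else 0) * ∏ s' ∈ univ.erase s, μ₁ s' (g s'))
                * ((if h t = b' then (1:ℝ) else 0) * ∏ t' ∈ univ.erase t, μ₂ t' (h t')))
            = P s t a' b' := by
          intro a' b'
          simp only [← Finset.mul_sum]
          rw [← Finset.sum_mul, sum_pi_weight μ₁ h3 s (fun x => if x = a' then 1 else 0),
            sum_pi_weight μ₂ h4 t (fun x => if x = b' then 1 else 0), hδ₁, hδ₂, mul_one, mul_one]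
        rw [Finset.sum_congr rfl fun a' _ => Finset.sum_congr rfl fun b' _ => this a' b']
        exact hP1 s t
      rw [A1, A2, sub_self]
    rw [T1, T2, add_zero]
  · -- marginals
    intro s₀ t₀ a b
    have hfilter : (univ.filter
        (fun ω : (Fin S₁ → Λ₁) × (Fin S₂ → Λ₂) => ω.1 s₀ = a ∧ ω.2 t₀ = b))
        = (univ.filter (fun g : Fin S₁ → Λ₁ => g s₀ = a)) ×ˢ
          (univ.filter (fun h : Fin S₂ → Λ₂ => h t₀ = b)) := by
      ext ω
      simp [Finset.mem_product]
    rw [hfilter, Finset.sum_product]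
    set G := univ.filter (fun g : Fin S₁ → Λ₁ => g s₀ = a) with hG
    set Hf := univ.filter (fun h : Fin S₂ → Λ₂ => h t₀ = b) with hHf
    simp only [hν]
    rw [Finset.sum_congr rfl fun g _ => Finset.sum_add_distrib, Finset.sum_add_distrib]
    have T1 : ∑ g ∈ G, ∑ h ∈ Hf,
        (∏ s, μ₁ s (g s)) * (∏ t, μ₂ t (h t)) = μ₁ s₀ a * μ₂ t₀ b := by
      rw [← Finset.sum_mul_sum, sum_pi_filter_prod μ₁ h3 s₀ a, sum_pi_filter_prod μ₂ h4 t₀ b]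
    have T2 : ∑ g ∈ G, ∑ h ∈ Hf,
        (∑ s, ∑ t, (P s t (g s) (h t) - μ₁ s (g s) * μ₂ t (h t))
          * ((∏ s' ∈ univ.erase s, μ₁ s' (g s'))
              * (∏ t' ∈ univ.erase t, μ₂ t' (h t'))))
        = P s₀ t₀ a b - μ₁ s₀ a * μ₂ t₀ b := by
      rw [sum_comm4]
      have Est : ∀ s t, ∑ g ∈ G, ∑ h ∈ Hf,
          (P s t (g s) (h t) - μ₁ s (g s) * μ₂ t (h t))
            * ((∏ s' ∈ univ.erase s, μ₁ s' (g s'))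
                * (∏ t' ∈ univ.erase t, μ₂ t' (h t')))
          = if s = s₀ ∧ t = t₀ then P s₀ t₀ a b - μ₁ s₀ a * μ₂ t₀ b else 0 := by
        intro s t
        have split : ∀ (g : Fin S₁ → Λ₁) (h : Fin S₂ → Λ₂),
            (P s t (g s) (h t) - μ₁ s (g s) * μ₂ t (h t))
              * ((∏ s' ∈ univ.erase s, μ₁ s' (g s'))
                  * (∏ t' ∈ univ.erase t, μ₂ t' (h t')))
            = (∑ a', ∑ b', P s t a' b' *
                (((if g s = a' then (1:ℝ) else 0) * ∏ s' ∈ univ.erase s, μ₁ s' (g s'))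
                  * ((if h t = b' then (1:ℝ) else 0) * ∏ t' ∈ univ.erase t, μ₂ t' (h t'))))
              - (μ₁ s (g s) * ∏ s' ∈ univ.erase s, μ₁ s' (g s'))
                  * (μ₂ t (h t) * ∏ t' ∈ univ.erase t, μ₂ t' (h t')) := by
          intro g h
          rw [sub_mul]
          congr 1
          · rw [hPexp s t (g s) (h t), Finset.sum_mul]
            refine Finset.sum_congr rfl fun a' _ => ?_
            rw [Finset.sum_mul]
            refine Finset.sum_congr rfl fun b' _ => ?_
            ring
          · ring
        simp only [split]
        rw [Finset.sum_congr rfl fun g _ => Finset.sum_sub_distrib _ _, Finset.sum_sub_distrib]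
        have A2 : ∑ g ∈ G, ∑ h ∈ Hf,
            (μ₁ s (g s) * ∏ s' ∈ univ.erase s, μ₁ s' (g s'))
              * (μ₂ t (h t) * ∏ t' ∈ univ.erase t, μ₂ t' (h t'))
            = μ₁ s₀ a * μ₂ t₀ b := by
          rw [← Finset.sum_mul_sum, hG, hHf,
            sum_pi_filter_weight μ₁ h3 s₀ a s (μ₁ s),
            sum_pi_filter_weight μ₂ h4 t₀ b t (μ₂ t)]
          by_cases hs : s = s₀ <;> by_cases ht : t = t₀ <;>
            simp [hs, ht, h3, h4]
        have A1 : ∑ g ∈ G, ∑ h ∈ Hf,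
            (∑ a', ∑ b', P s t a' b' *
                (((if g s = a' then (1:ℝ) else 0) * ∏ s' ∈ univ.erase s, μ₁ s' (g s'))
                  * ((if h t = b' then (1:ℝ) else 0) * ∏ t' ∈ univ.erase t, μ₂ t' (h t'))))
            = if s = s₀ ∧ t = t₀ then P s₀ t₀ a b else μ₁ s₀ a * μ₂ t₀ b := by
          rw [sum_comm4]
          have inner : ∀ a' b', ∑ g ∈ G, ∑ h ∈ Hf,
              P s t a' b' *
                (((if g s = a' then (1:ℝ) else 0) * ∏ s' ∈ univ.erase s, μ₁ s' (g s'))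
                  * ((if h t = b' then (1:ℝ) else 0) * ∏ t' ∈ univ.erase t, μ₂ t' (h t')))
              = P s t a' b'
                  * ((if s = s₀ then (if a = a' then (1:ℝ) else 0) else μ₁ s₀ a)
                    * (if t = t₀ then (if b = b' then (1:ℝ) else 0) else μ₂ t₀ b)) := by
            intro a' b'
            simp only [← Finset.mul_sum]
            rw [← Finset.sum_mul, hG, hHf,
              sum_pi_filter_weight μ₁ h3 s₀ a s (fun x => if x = a' then 1 else 0),
              sum_pi_filter_weight μ₂ h4 t₀ b t (fun x => if x = b' then 1 else 0),
              hδ₁, hδ₂]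
            by_cases hs : s = s₀ <;> by_cases ht : t = t₀ <;> simp [hs, ht]
          rw [Finset.sum_congr rfl fun a' _ => Finset.sum_congr rfl fun b' _ => inner a' b']
          by_cases hs : s = s₀ <;> by_cases ht : t = t₀
          · rw [hs, ht]
            simp only [if_pos rfl, and_self, if_true]
            simp [mul_ite, mul_zero, mul_one, Finset.sum_ite_eq]
          · rw [hs]
            rw [if_neg (by simp [ht])]
            have e : ∀ a', ∑ b', P s₀ t a' b'
                * ((if s₀ = s₀ then (if a = a' then (1:ℝ) else 0) else μ₁ s₀ a)
                  * (if t = t₀ then (if b = b' then (1:ℝ) else 0) else μ₂ t₀ b))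
                = (if a = a' then (1:ℝ) else 0) * (μ₁ s₀ a' * μ₂ t₀ b) := by
              intro a'
              simp only [if_pos rfl, if_neg ht]
              rw [← Finset.sum_mul, h1 s₀ t a']
              simp only [if_true]
              ring
            rw [Finset.sum_congr rfl fun a' _ => e a']
            simp [ite_mul, one_mul, zero_mul, Finset.sum_ite_eq]
          · rw [ht]
            rw [if_neg (by simp [hs])]
            have e : ∀ a', ∑ b', P s t₀ a' b'
                * ((if s = s₀ then (if a = a' then (1:ℝ) else 0) else μ₁ s₀ a)
                  * (if t₀ = t₀ then (if b = b' then (1:ℝ) else 0) else μ₂ t₀ b))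
                = μ₁ s₀ a * P s t₀ a' b := by
              intro a'
              simp only [if_pos rfl, if_neg hs]
              simp [mul_ite, mul_zero, mul_one, Finset.sum_ite_eq]
              ring
            rw [Finset.sum_congr rfl fun a' _ => e a']
            rw [← Finset.mul_sum, h2 s t₀ b]
          · rw [if_neg (by simp [hs])]
            have e : ∀ a', ∑ b', P s t a' b'
                * ((if s = s₀ then (if a = a' then (1:ℝ) else 0) else μ₁ s₀ a)
                  * (if t = t₀ then (if b = b' then (1:ℝ) else 0) else μ₂ t₀ b))
                = (∑ b', P s t a' b') * (μ₁ s₀ a * μ₂ t₀ b) := by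
              intro a'
              simp only [if_neg hs, if_neg ht]
              rw [← Finset.sum_mul]
            rw [Finset.sum_congr rfl fun a' _ => e a', ← Finset.sum_mul,
              Finset.sum_congr rfl fun a' _ => h1 s t a', h3 s, one_mul]
        rw [A1, A2]
        by_cases hs : s = s₀ <;> by_cases ht : t = t₀ <;> simp [hs, ht]
      rw [Finset.sum_congr rfl fun s _ => Finset.sum_congr rfl fun t _ => Est s t]
      have e2 : ∀ s : Fin S₁, (∑ t : Fin S₂, if s = s₀ ∧ t = t₀ then
          P s₀ t₀ a b - μ₁ s₀ a * μ₂ t₀ b else 0)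
          = if s = s₀ then P s₀ t₀ a b - μ₁ s₀ a * μ₂ t₀ b else 0 := by
        intro s
        by_cases hs : s = s₀ <;> simp [hs, Finset.sum_ite_eq]
      rw [Finset.sum_congr rfl fun s _ => e2 s]
      simp [Finset.sum_ite_eq]
    rw [T1, T2]
    ring

section Kron
open Finset
variable {d₁ d₂ : Type*} [Fintype d₁] [Fintype d₂] [DecidableEq d₁] [DecidableEq d₂]

lemma kron_sum_right {Λ : Type*} [Fintype Λ] (A : Matrix d₁ d₁ ℂ) (f : Λ → Matrix d₂ d₂ ℂ) :
    A ⊗ₖ (∑ b, f b) = ∑ b, A ⊗ₖ f b := by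
  ext i j
  simp [Matrix.kroneckerMap_apply, Matrix.sum_apply, Finset.mul_sum]

lemma kron_sum_left {Λ : Type*} [Fintype Λ] (B : Matrix d₂ d₂ ℂ) (f : Λ → Matrix d₁ d₁ ℂ) :
    (∑ a, f a) ⊗ₖ B = ∑ a, f a ⊗ₖ B := by
  ext i j
  simp [Matrix.kroneckerMap_apply, Matrix.sum_apply, Finset.sum_mul]

end Kron
end Helpers

/-- Corollary 1, bipartite finite version: every bipartite quantum
correlation scenario admits a deterministic LqHV model. -/
theorem quantum_scenario_deterministic_lqhv
    {d₁ d₂ : Type*} [Fintype d₁] [Fintype d₂] [DecidableEq d₁] [DecidableEq d₂]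
    {Λ₁ Λ₂ : Type*} [Fintype Λ₁] [Fintype Λ₂] [DecidableEq Λ₁] [DecidableEq Λ₂]
    [Nonempty Λ₁] [Nonempty Λ₂] {S₁ S₂ : ℕ}
    (ρ : Matrix (d₁ × d₂) (d₁ × d₂) ℂ) (hρ : ρ.PosSemidef) (hρtr : ρ.trace = 1)
    (M₁ : Fin S₁ → Λ₁ → Matrix d₁ d₁ ℂ) (M₂ : Fin S₂ → Λ₂ → Matrix d₂ d₂ ℂ)
    (hM₁pos : ∀ s₁ a, (M₁ s₁ a).PosSemidef) (hM₁norm : ∀ s₁, ∑ a, M₁ s₁ a = 1)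
    (hM₂pos : ∀ s₂ b, (M₂ s₂ b).PosSemidef) (hM₂norm : ∀ s₂, ∑ b, M₂ s₂ b = 1)
    (P : Fin S₁ → Fin S₂ → Λ₁ → Λ₂ → ℝ)
    (hP : ∀ s₁ s₂ a b, (P s₁ s₂ a b : ℂ) = (ρ * (M₁ s₁ a ⊗ₖ M₂ s₂ b)).trace) :
    ∃ (Ω : Type) (_ : Fintype Ω) (_ : DecidableEq Ω) (ν : Ω → ℝ)
        (f₁ : Fin S₁ → Ω → Λ₁) (f₂ : Fin S₂ → Ω → Λ₂),
      (∑ ω, ν ω) = 1 ∧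
      ∀ s₁ s₂ a b,
        P s₁ s₂ a b
          = ∑ ω ∈ Finset.univ.filter (fun ω : Ω => f₁ s₁ ω = a ∧ f₂ s₂ ω = b), ν ω := by
  classical
  set e₁ := Fintype.equivFin Λ₁ with he₁
  set e₂ := Fintype.equivFin Λ₂ with he₂
  set μ₁ : Fin S₁ → Λ₁ → ℝ :=
    fun s a => ((ρ * (M₁ s a ⊗ₖ (1 : Matrix d₂ d₂ ℂ))).trace).re with hμ₁
  set μ₂ : Fin S₂ → Λ₂ → ℝ :=
    fun t b => ((ρ * ((1 : Matrix d₁ d₁ ℂ) ⊗ₖ M₂ t b)).trace).re with hμ₂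
  have hC1 : ∀ s t a, ((∑ b, P s t a b : ℝ) : ℂ)
      = (ρ * (M₁ s a ⊗ₖ (1 : Matrix d₂ d₂ ℂ))).trace := by
    intro s t a
    push_cast
    simp only [hP]
    rw [← Matrix.trace_sum, ← Finset.mul_sum, ← kron_sum_right, hM₂norm]
  have hC2 : ∀ s t b, ((∑ a, P s t a b : ℝ) : ℂ)
      = (ρ * ((1 : Matrix d₁ d₁ ℂ) ⊗ₖ M₂ t b)).trace := by
    intro s t b
    push_cast
    simp only [hP]
    rw [← Matrix.trace_sum, ← Finset.mul_sum, ← kron_sum_left, hM₁norm]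
  have h1 : ∀ s t a, ∑ b, P s t a b = μ₁ s a := by
    intro s t a
    show _ = ((ρ * (M₁ s a ⊗ₖ (1 : Matrix d₂ d₂ ℂ))).trace).re
    rw [← hC1 s t a, Complex.ofReal_re]
  have h2 : ∀ s t b, ∑ a, P s t a b = μ₂ t b := by
    intro s t b
    show _ = ((ρ * ((1 : Matrix d₁ d₁ ℂ) ⊗ₖ M₂ t b)).trace).re
    rw [← hC2 s t b, Complex.ofReal_re]
  have h3 : ∀ s, ∑ a, μ₁ s a = 1 := by
    intro s
    rw [hμ₁]
    simp only
    rw [← Complex.re_sum, ← Matrix.trace_sum, ← Finset.mul_sum, ← kron_sum_left,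
      hM₁norm s, Matrix.one_kronecker_one, mul_one, hρtr]
    simp
  have h4 : ∀ t, ∑ b, μ₂ t b = 1 := by
    intro t
    rw [hμ₂]
    simp only
    rw [← Complex.re_sum, ← Matrix.trace_sum, ← Finset.mul_sum, ← kron_sum_right,
      hM₂norm t, Matrix.one_kronecker_one, mul_one, hρtr]
    simp
  obtain ⟨ν, hmass, hmarg⟩ :=
    lqhv_core (fun s t x y => P s t (e₁.symm x) (e₂.symm y))
      (fun s x => μ₁ s (e₁.symm x)) (fun t y => μ₂ t (e₂.symm y))
      (fun s t x => by
        show ∑ y, P s t (e₁.symm x) (e₂.symm y) = μ₁ s (e₁.symm x)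
        rw [← h1 s t (e₁.symm x)]; exact Equiv.sum_comp e₂.symm (P s t (e₁.symm x)))
      (fun s t y => by
        show ∑ x, P s t (e₁.symm x) (e₂.symm y) = μ₂ t (e₂.symm y)
        rw [← h2 s t (e₂.symm y)]; exact Equiv.sum_comp e₁.symm (fun u => P s t u (e₂.symm y)))
      (fun s => by
        show ∑ x, μ₁ s (e₁.symm x) = 1
        rw [← h3 s]; exact Equiv.sum_comp e₁.symm (μ₁ s))
      (fun t => by
        show ∑ y, μ₂ t (e₂.symm y) = 1
        rw [← h4 t]; exact Equiv.sum_comp e₂.symm (μ₂ t))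
  refine ⟨(Fin S₁ → Fin (Fintype.card Λ₁)) × (Fin S₂ → Fin (Fintype.card Λ₂)),
    inferInstance, inferInstance, ν,
    fun s ω => e₁.symm (ω.1 s), fun t ω => e₂.symm (ω.2 t), hmass, ?_⟩
  intro s₀ t₀ a b
  have hm := hmarg s₀ t₀ (e₁ a) (e₂ b)
  simp only [Equiv.symm_apply_apply] at hm
  rw [← hm]
  congr 1
  apply Finset.filter_congr
  intro ω _
  simp [Equiv.symm_apply_eq]
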